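/- Let X be a set and H a subgroup of S(X). Choose a set R of representatives of the H-orbits on X. Then the centralizer of H in S(X) is trivial if and only if: (a) for every x ∈ R, the stabilizer S_x = {h ∈ H : h(x) = x} equals its own normalizer in H, and (b) for all distinct x, y ∈ R, the subgroups S_x and S_y are not conjugate in H. -/

import Mathlib

open MulAction

private lemma wd_aux17 {X : Type*} {H : Subgroup (Equiv.Perm X)} {a b : X}
    (hst : stabilizer H a = stabilizer H b) {g g' : H} (h : g • a = g' • a) :
    g • b = g' • b := by
  have hm : g'⁻¹ * g ∈ stabilizer H a := by
    rw [mem_stabilizer_iff, mul_smul, h, ← mul_smul, inv_mul_cancel, one_smul]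
  rw [hst, mem_stabilizer_iff] at hm
  calc g • b = g' • ((g'⁻¹ * g) • b) := by rw [← mul_smul, mul_inv_cancel_left]
    _ = g' • b := by rw [hm]

open Classical in
private noncomputable def FF17 {X : Type*} (H : Subgroup (Equiv.Perm X)) (a b : X) : X → X :=
  fun p =>
    if hp : p ∈ orbit H a then (mem_orbit_iff.mp hp).choose • b
    else if hq : p ∈ orbit H b then (mem_orbit_iff.mp hq).choose • a
    else p

private lemma FF17_smul_left {X : Type*} {H : Subgroup (Equiv.Perm X)} {a b : X}
    (hst : stabilizer H a = stabilizer H b) (g : H) : FF17 H a b (g • a) = g • b := by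
  have hp : g • a ∈ orbit H a := mem_orbit _ _
  rw [FF17, dif_pos hp]
  exact wd_aux17 hst (mem_orbit_iff.mp hp).choose_spec

private lemma FF17_smul_right {X : Type*} {H : Subgroup (Equiv.Perm X)} {a b : X}
    (hst : stabilizer H a = stabilizer H b) (hne : orbit H a ≠ orbit H b) (g : H) :
    FF17 H a b (g • b) = g • a := by
  have hp : g • b ∉ orbit H a := by
    intro h
    obtain ⟨k, hk⟩ := mem_orbit_iff.mp h
    have hba : b ∈ orbit H a := mem_orbit_iff.mpr ⟨g⁻¹ * k,
      by rw [mul_smul, hk, ← mul_smul, inv_mul_cancel, one_smul]⟩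
    exact hne (orbit_eq_iff.mpr hba).symm
  have hq : g • b ∈ orbit H b := mem_orbit _ _
  rw [FF17, dif_neg hp, dif_pos hq]
  exact wd_aux17 hst.symm (mem_orbit_iff.mp hq).choose_spec

private lemma FF17_notin {X : Type*} {H : Subgroup (Equiv.Perm X)} {a b : X} {p : X}
    (hpa : p ∉ orbit H a) (hpb : p ∉ orbit H b) : FF17 H a b p = p := by
  rw [FF17, dif_neg hpa, dif_neg hpb]

private lemma FF17_inv {X : Type*} {H : Subgroup (Equiv.Perm X)} {a b : X}
    (hst : stabilizer H a = stabilizer H b) (p : X) : FF17 H b a (FF17 H a b p) = p := by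
  by_cases hp : p ∈ orbit H a
  · obtain ⟨g, hg⟩ := mem_orbit_iff.mp hp
    rw [← hg, FF17_smul_left hst, FF17_smul_left hst.symm]
  · by_cases hq : p ∈ orbit H b
    · have hne : orbit H a ≠ orbit H b := fun h => hp (h ▸ hq)
      obtain ⟨g, hg⟩ := mem_orbit_iff.mp hq
      rw [← hg, FF17_smul_right hst hne, FF17_smul_right hst.symm (Ne.symm hne)]
    · rw [FF17_notin hp hq, FF17_notin hq hp]

private lemma FF17_comm {X : Type*} {H : Subgroup (Equiv.Perm X)} {a b : X}
    (hst : stabilizer H a = stabilizer H b) (h : H) (p : X) :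
    FF17 H a b (h • p) = h • FF17 H a b p := by
  by_cases hp : p ∈ orbit H a
  · obtain ⟨g, hg⟩ := mem_orbit_iff.mp hp
    rw [← hg, ← mul_smul, FF17_smul_left hst, FF17_smul_left hst, mul_smul]
  · by_cases hq : p ∈ orbit H b
    · have hne : orbit H a ≠ orbit H b := fun h => hp (h ▸ hq)
      obtain ⟨g, hg⟩ := mem_orbit_iff.mp hq
      rw [← hg, ← mul_smul, FF17_smul_right hst hne, FF17_smul_right hst hne, mul_smul]
    · have hp' : h • p ∉ orbit H a := by
        intro hmem
        obtain ⟨g, hg⟩ := mem_orbit_iff.mp hmem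
        exact hp ⟨h⁻¹ * g, by (show (h⁻¹ * g) • a = p); rw [mul_smul, hg, ← mul_smul, inv_mul_cancel, one_smul]⟩
      have hq' : h • p ∉ orbit H b := by
        intro hmem
        obtain ⟨g, hg⟩ := mem_orbit_iff.mp hmem
        exact hq ⟨h⁻¹ * g, by (show (h⁻¹ * g) • b = p); rw [mul_smul, hg, ← mul_smul, inv_mul_cancel, one_smul]⟩
      rw [FF17_notin hp hq, FF17_notin hp' hq']

private lemma key17 {X : Type*} {H : Subgroup (Equiv.Perm X)} {x z : X}
    (hst : stabilizer H x = stabilizer H z) (hxz : x ≠ z) :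
    Subgroup.centralizer (H : Set (Equiv.Perm X)) ≠ ⊥ := by
  set τ : Equiv.Perm X := ⟨FF17 H x z, FF17 H z x, FF17_inv hst, FF17_inv hst.symm⟩ with hτ
  have hmem : τ ∈ Subgroup.centralizer (H : Set (Equiv.Perm X)) := by
    rw [Subgroup.mem_centralizer_iff]
    intro g hg
    ext p
    have := FF17_comm hst ⟨g, hg⟩ p
    simp only [Subgroup.mk_smul, Equiv.Perm.smul_def] at this ⊢
    simpa [hτ, Equiv.Perm.mul_apply] using this.symm
  have hne : τ ≠ 1 := by
    intro h1
    have : τ x = z := by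
      have := FF17_smul_left hst (1 : H)
      exact (by simpa using this : FF17 H x z x = z)
    rw [h1] at this
    exact hxz (by simpa using this)
  intro hbot
  rw [hbot, Subgroup.mem_bot] at hmem
  exact hne hmem

private lemma conj_map_eq17 {G : Type*} [Group G] {K : Subgroup G} {n : G}
    (hn : n ∈ Subgroup.normalizer (K : Set G)) : K.map (MulAut.conj n).toMonoidHom = K := by
  ext x
  simp only [Subgroup.mem_map, MulEquiv.coe_toMonoidHom, MulAut.conj_apply]
  constructor
  · rintro ⟨k, hk, rfl⟩
    exact (Subgroup.mem_normalizer_iff.mp hn k).mp hk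
  · intro hx
    refine ⟨n⁻¹ * x * n, ?_, by group⟩
    have := (Subgroup.mem_normalizer_iff.mp ((Subgroup.normalizer (K : Set G)).inv_mem hn) x).mp hx
    simpa [mul_assoc] using this

private lemma map_conj_mem_normalizer17 {G : Type*} [Group G] {K : Subgroup G} {n : G}
    (h : K.map (MulAut.conj n).toMonoidHom = K) : n ∈ Subgroup.normalizer (K : Set G) := by
  rw [Subgroup.mem_normalizer_iff]
  intro k
  constructor
  · intro hk
    rw [← h]
    exact ⟨k, hk, rfl⟩
  · intro hk
    rw [← h] at hk
    obtain ⟨k', hk', heq⟩ := hk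
    simp only [MulEquiv.coe_toMonoidHom, MulAut.conj_apply] at heq
    have : k' = k := mul_left_cancel (mul_right_cancel heq)
    exact this ▸ hk'

theorem stmt17 (X : Type*) (H : Subgroup (Equiv.Perm X)) (R : Set X)
    (hR1 : ∀ x : X, ∃ r ∈ R, x ∈ MulAction.orbit H r)
    (hR2 : ∀ r ∈ R, ∀ s ∈ R, s ∈ MulAction.orbit H r → r = s) :
    Subgroup.centralizer (H : Set (Equiv.Perm X)) = ⊥ ↔
      ((∀ x ∈ R, Subgroup.normalizer (MulAction.stabilizer H x : Set H) = MulAction.stabilizer H x) ∧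
       (∀ x ∈ R, ∀ y ∈ R, x ≠ y →
          ¬ ∃ h : H, (MulAction.stabilizer H x).map (MulAut.conj h).toMonoidHom =
              MulAction.stabilizer H y)) := by
  constructor
  · intro hbot
    constructor
    · intro x _
      refine le_antisymm ?_ Subgroup.le_normalizer
      intro n hn
      have hmap : (stabilizer H x).map (MulAut.conj n).toMonoidHom = stabilizer H x :=
        conj_map_eq17 hn
      have hst : stabilizer H (n • x) = stabilizer H x := by
        rw [stabilizer_smul_eq_stabilizer_map_conj, hmap]
      by_contra hns
      have hne : x ≠ n • x := by
        intro h
        exact hns (mem_stabilizer_iff.mpr h.symm)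
      exact key17 hst.symm hne hbot
    · rintro x hx y hy hxy ⟨h, hmap⟩
      have hst : stabilizer H y = stabilizer H (h • x) := by
        rw [stabilizer_smul_eq_stabilizer_map_conj, hmap]
      have hne : y ≠ h • x := by
        intro heq
        exact hxy (hR2 x hx y hy (heq ▸ mem_orbit x h))
      exact key17 hst hne hbot
  · rintro ⟨ha, hb⟩
    rw [Subgroup.eq_bot_iff_forall]
    intro τ hτ
    have hcomm : ∀ (h : H) (p : X), (h : Equiv.Perm X) (τ p) = τ ((h : Equiv.Perm X) p) := by
      intro h p
      have h2 := Subgroup.mem_centralizer_iff.mp hτ (h : Equiv.Perm X) h.2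
      have h3 : ((h : Equiv.Perm X) * τ) p = (τ * (h : Equiv.Perm X)) p := by rw [h2]
      simpa [Equiv.Perm.mul_apply] using h3
    have hstab : ∀ r : X, stabilizer H (τ r) = stabilizer H r := by
      intro r
      ext h
      simp only [mem_stabilizer_iff, Subgroup.smul_def, Equiv.Perm.smul_def]
      rw [hcomm h r]
      exact ⟨fun he => τ.injective he, fun he => by rw [he]⟩
    have hfixR : ∀ r ∈ R, τ r = r := by
      intro r hr
      obtain ⟨s, hs, hmem⟩ := hR1 (τ r)
      obtain ⟨g, hg⟩ := mem_orbit_iff.mp hmem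
      have hmapc : (stabilizer H s).map (MulAut.conj g).toMonoidHom = stabilizer H r := by
        rw [← stabilizer_smul_eq_stabilizer_map_conj, hg, hstab]
      have hsr : s = r := by
        by_contra hne
        exact hb s hs r hr hne ⟨g, hmapc⟩
      subst hsr
      have hgstab : g ∈ stabilizer H s := by
        rw [← ha s hs]
        exact map_conj_mem_normalizer17 hmapc
      rw [← hg, hgstab]
    ext p
    obtain ⟨r, hr, hmem⟩ := hR1 p
    obtain ⟨g, hg⟩ := mem_orbit_iff.mp hmem
    have : τ p = p := by
      rw [← hg]
      simp only [Subgroup.smul_def, Equiv.Perm.smul_def]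
      rw [← hcomm g r, hfixR r hr]
    simpa using this
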